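/- Let A and B be real symmetric n×n matrices, let a and b with −∞ ≤ a < b ≤ ∞ be such that all eigenvalues of A and of B lie in the open interval (a, b), and let f : (a,b) → ℝ be of bounded variation on (a,b) with total variation V_f(a,b). Then |F_A(f) − F_B(f)| ≤ ‖F_A − F_B‖_∞ · V_f(a,b). In particular, if ‖F_A − F_B‖_∞ ≤ r/n for an integer r, then |F_A(f) − F_B(f)| ≤ r·V_f(a,b)/n. -/

import Mathlib

open scoped Matrix ENNReal

/-- Spectral distribution integral `F_M(f) = (1/n) ∑_i f(λ_i(M))` of a symmetric
(Hermitian) real matrix `M`; junk value `0` for non-Hermitian matrices. -/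
noncomputable def specInt {ι : Type*} [Fintype ι] [DecidableEq ι]
    (M : Matrix ι ι ℝ) (f : ℝ → ℝ) : ℝ :=
  if h : M.IsHermitian then (∑ i, f (h.eigenvalues i)) / (Fintype.card ι) else 0

open scoped Classical in
/-- Empirical spectral cumulative distribution function
`F_M(λ) = (1/n) #{i : λ_i(M) ≤ λ}`; junk value `0` for non-Hermitian matrices. -/
noncomputable def esdCDF {ι : Type*} [Fintype ι] [DecidableEq ι]
    (M : Matrix ι ι ℝ) (lam : ℝ) : ℝ :=
  if h : M.IsHermitian then
    ((Finset.univ.filter fun i => h.eigenvalues i ≤ lam).card : ℝ) / (Fintype.card ι)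
  else 0

open scoped Classical in
lemma esdCDF_eq {n : ℕ} (A : Matrix (Fin n) (Fin n) ℝ) (hA : A.IsHermitian) (lam : ℝ) :
    esdCDF A lam
      = ((Finset.univ.filter fun i => hA.eigenvalues i ≤ lam).card : ℝ) / n := by
  rw [esdCDF, dif_pos hA, Fintype.card_fin]

lemma esdCDF_nonneg {n : ℕ} (A : Matrix (Fin n) (Fin n) ℝ) (hA : A.IsHermitian) (lam : ℝ) :
    0 ≤ esdCDF A lam := by
  rw [esdCDF_eq A hA]; positivity

lemma esdCDF_le_one {n : ℕ} (hn : 0 < n) (A : Matrix (Fin n) (Fin n) ℝ)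
    (hA : A.IsHermitian) (lam : ℝ) : esdCDF A lam ≤ 1 := by
  classical
  rw [esdCDF_eq A hA]
  rw [div_le_one (by positivity)]
  have := Finset.card_filter_le (Finset.univ : Finset (Fin n)) (fun i => hA.eigenvalues i ≤ lam)
  have h2 : (Finset.univ : Finset (Fin n)).card = n := by simp
  exact_mod_cast h2 ▸ this

lemma key {n : ℕ} (hn : 0 < n)
    (A B : Matrix (Fin n) (Fin n) ℝ) (hA : A.IsHermitian) (hB : B.IsHermitian)
    (a b : EReal)
    (hAspec : ∀ i, a < (hA.eigenvalues i : EReal) ∧ (hA.eigenvalues i : EReal) < b)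
    (hBspec : ∀ i, a < (hB.eigenvalues i : EReal) ∧ (hB.eigenvalues i : EReal) < b)
    (f : ℝ → ℝ) (Vf : ℝ) (hVf0 : 0 ≤ Vf)
    (hVf : eVariationOn f {x : ℝ | a < (x : EReal) ∧ (x : EReal) < b} = ENNReal.ofReal Vf)
    (C : ℝ) (hC0 : 0 ≤ C)
    (hC : ∀ lam : ℝ, |esdCDF A lam - esdCDF B lam| ≤ C) :
    |specInt A f - specInt B f| ≤ C * Vf := by
  classical
  set N := n + n with hN
  have hNpos : 0 < N := by omega
  set α := hA.eigenvalues with hα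
  set β := hB.eigenvalues with hβ
  set h0 : Fin N → ℝ := Fin.append α β with hh0
  set ε : Fin N → ℝ := Fin.append (fun _ => (1 : ℝ)) (fun _ => (-1 : ℝ)) with hε
  set σ : Equiv.Perm (Fin N) := Tuple.sort h0 with hσ
  set x : Fin N → ℝ := h0 ∘ σ with hx
  set s : Fin N → ℝ := ε ∘ σ with hs
  have hmono : Monotone x := Tuple.monotone_sort h0
  have hmem0 : ∀ k : Fin N, a < ((h0 k : ℝ) : EReal) ∧ ((h0 k : ℝ) : EReal) < b := by
    intro k
    refine Fin.addCases (fun i => ?_) (fun i => ?_) k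
    · simpa only [hh0, Fin.append_left] using hAspec i
    · simpa only [hh0, Fin.append_right] using hBspec i
  have hmem : ∀ k : Fin N, x k ∈ {y : ℝ | a < (y : EReal) ∧ (y : EReal) < b} := by
    intro k; exact hmem0 (σ k)
  -- counting identity
  have hcount : ∀ lam : ℝ,
      (∑ k : Fin N, if x k ≤ lam then s k else 0)
        = (n : ℝ) * (esdCDF A lam - esdCDF B lam) := by
    intro lam
    have h1 : (∑ k : Fin N, if x k ≤ lam then s k else 0)
        = ∑ k : Fin N, (if h0 k ≤ lam then ε k else 0) := by
      rw [← Equiv.sum_comp σ (fun k => if h0 k ≤ lam then ε k else 0)]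
      rfl
    have h2 : (∑ k : Fin N, if h0 k ≤ lam then ε k else 0)
        = (∑ i : Fin n, (if α i ≤ lam then (1 : ℝ) else 0))
          + ∑ i : Fin n, (if β i ≤ lam then (-1 : ℝ) else 0) := by
      rw [Fin.sum_univ_add]
      simp only [hh0, hε, Fin.append_left, Fin.append_right]
    have h3 : (∑ i : Fin n, (if α i ≤ lam then (1 : ℝ) else 0))
        = ((Finset.univ.filter fun i => α i ≤ lam).card : ℝ) := by
      simp [Finset.sum_boole]
    have h4 : (∑ i : Fin n, (if β i ≤ lam then (-1 : ℝ) else 0))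
        = -((Finset.univ.filter fun i => β i ≤ lam).card : ℝ) := by
      have e : ∀ i : Fin n, (if β i ≤ lam then (-1 : ℝ) else 0)
          = -(if β i ≤ lam then (1 : ℝ) else 0) := by intro i; split <;> simp
      simp_rw [e, Finset.sum_neg_distrib]
      simp [Finset.sum_boole]
    rw [h1, h2, h3, h4, esdCDF_eq A hA, esdCDF_eq B hB]
    have hn' : (n : ℝ) ≠ 0 := by positivity
    field_simp
    ring
  -- extended sequences indexed by ℕ
  set X : ℕ → ℝ := fun j => x ⟨min j (N - 1), by omega⟩ with hX
  set S : ℕ → ℝ := fun j => if hj : j < N then s ⟨j, hj⟩ else 0 with hS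
  have hXmono : Monotone X := by
    intro i j hij
    exact hmono (by simpa [Fin.mk_le_mk] using min_le_min hij (le_refl (N - 1)))
  have hXk : ∀ k : Fin N, X (k : ℕ) = x k := by
    intro k
    have hm : min (k : ℕ) (N - 1) = (k : ℕ) := by omega
    simp only [hX]
    congr 1
    exact Fin.ext hm
  have hSk : ∀ k : Fin N, S (k : ℕ) = s k := by
    intro k; simp only [hS, dif_pos k.isLt, Fin.eta]
  -- total sum of signs is zero
  have hG0 : (∑ j ∈ Finset.range N, S j) = 0 := by
    rw [← Fin.sum_univ_eq_sum_range S N]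
    rw [Finset.sum_congr rfl fun k _ => hSk k]
    have e1 : (∑ k : Fin N, s k) = ∑ k : Fin N, ε k := Equiv.sum_comp σ ε
    rw [e1, hε, Fin.sum_univ_add]
    simp only [Fin.append_left, Fin.append_right, Finset.sum_const, Finset.card_univ,
      Fintype.card_fin, nsmul_eq_mul, mul_one, mul_neg_one]
    ring
  -- main sum identity
  have hMain : (∑ i ∈ Finset.range N, f (X i) * S i)
      = (n : ℝ) * (specInt A f - specInt B f) := by
    have e1 : (∑ i ∈ Finset.range N, f (X i) * S i)
        = ∑ k : Fin N, f (x k) * s k := by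
      rw [← Fin.sum_univ_eq_sum_range (fun j => f (X j) * S j) N]
      refine Finset.sum_congr rfl fun k _ => ?_
      rw [hXk k, hSk k]
    have e2 : (∑ k : Fin N, f (x k) * s k) = ∑ k : Fin N, f (h0 k) * ε k := by
      rw [← Equiv.sum_comp σ (fun k => f (h0 k) * ε k)]
      rfl
    have e3 : (∑ k : Fin N, f (h0 k) * ε k)
        = (∑ i : Fin n, f (α i)) - ∑ i : Fin n, f (β i) := by
      rw [Fin.sum_univ_add]
      simp only [hh0, hε, Fin.append_left, Fin.append_right, mul_one, mul_neg_one,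
        Finset.sum_neg_distrib, sub_eq_add_neg]
    have hn' : (n : ℝ) ≠ 0 := by positivity
    rw [e1, e2, e3, specInt, dif_pos hA, specInt, dif_pos hB, Fintype.card_fin]
    field_simp
    rfl
  -- partial sums at jumps
  have hpart : ∀ i : ℕ, i < N - 1 → X i < X (i + 1) →
      (∑ j ∈ Finset.range (i + 1), S j) = (n : ℝ) * (esdCDF A (X i) - esdCDF B (X i)) := by
    intro i hi hlt
    rw [← hcount (X i)]
    have hxiff : ∀ k : Fin N, (x k ≤ X i ↔ (k : ℕ) ≤ i) := by
      intro k
      constructor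
      · intro hk
        by_contra hki
        push_neg at hki
        have h2 : X (i + 1) ≤ X (k : ℕ) := hXmono (by omega)
        rw [hXk k] at h2
        linarith
      · intro hk
        rw [← hXk k]
        exact hXmono hk
    have e1 : (∑ k : Fin N, if x k ≤ X i then s k else 0)
        = ∑ k : Fin N, if (k : ℕ) ≤ i then s k else 0 := by
      refine Finset.sum_congr rfl fun k _ => ?_
      simp only [hxiff k]
    have e2 : (∑ k : Fin N, if (k : ℕ) ≤ i then s k else 0)
        = ∑ j ∈ Finset.range N, (if j ≤ i then S j else 0) := by
      rw [← Fin.sum_univ_eq_sum_range (fun j => if j ≤ i then S j else 0) N]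
      refine Finset.sum_congr rfl fun k _ => ?_
      rw [hSk k]
    have e3 : (∑ j ∈ Finset.range N, (if j ≤ i then S j else 0))
        = ∑ j ∈ Finset.range (i + 1), S j := by
      rw [← Finset.sum_filter]
      congr 1
      ext j
      simp only [Finset.mem_filter, Finset.mem_range]
      omega
    rw [e1, e2, e3]
  -- Abel summation
  have habel := Finset.sum_range_by_parts (fun k => f (X k)) S N
  simp only [smul_eq_mul] at habel
  rw [hG0, mul_zero, zero_sub] at habel
  -- variation bound
  have hVar : (∑ i ∈ Finset.range (N - 1), |f (X (i + 1)) - f (X i)|) ≤ Vf := by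
    have hsum := eVariationOn.sum_le (f := f) (n := N - 1) hXmono (fun j => hmem _)
    rw [hVf] at hsum
    have e : (∑ i ∈ Finset.range (N - 1), edist (f (X (i + 1))) (f (X i)))
        = ENNReal.ofReal (∑ i ∈ Finset.range (N - 1), |f (X (i + 1)) - f (X i)|) := by
      rw [ENNReal.ofReal_sum_of_nonneg (fun i _ => abs_nonneg _)]
      refine Finset.sum_congr rfl fun i _ => ?_
      rw [edist_dist, Real.dist_eq]
    rw [e] at hsum
    exact (ENNReal.ofReal_le_ofReal_iff hVf0).mp hsum
  -- termwise bound
  have hterm : ∀ i ∈ Finset.range (N - 1),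
      |(f (X (i + 1)) - f (X i)) * ∑ j ∈ Finset.range (i + 1), S j|
        ≤ ((n : ℝ) * C) * |f (X (i + 1)) - f (X i)| := by
    intro i hi
    rw [Finset.mem_range] at hi
    rcases eq_or_lt_of_le (hXmono (Nat.le_succ i)) with heq | hlt
    · rw [← heq, sub_self, zero_mul, abs_zero]
      simp
    · rw [abs_mul, hpart i hi hlt]
      have h1 : |(n : ℝ) * (esdCDF A (X i) - esdCDF B (X i))| ≤ (n : ℝ) * C := by
        rw [abs_mul, abs_of_nonneg (by positivity : (0 : ℝ) ≤ (n : ℝ))]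
        exact mul_le_mul_of_nonneg_left (hC _) (by positivity)
      have h2 := abs_nonneg (f (X (i + 1)) - f (X i))
      nlinarith [abs_nonneg ((n : ℝ) * (esdCDF A (X i) - esdCDF B (X i)))]
  -- putting it together
  have hfinal : |∑ i ∈ Finset.range N, f (X i) * S i| ≤ ((n : ℝ) * C) * Vf := by
    rw [habel, abs_neg]
    calc |∑ i ∈ Finset.range (N - 1),
            (f (X (i + 1)) - f (X i)) * ∑ j ∈ Finset.range (i + 1), S j|
        ≤ ∑ i ∈ Finset.range (N - 1),
            |(f (X (i + 1)) - f (X i)) * ∑ j ∈ Finset.range (i + 1), S j| :=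
          Finset.abs_sum_le_sum_abs _ _
      _ ≤ ∑ i ∈ Finset.range (N - 1), ((n : ℝ) * C) * |f (X (i + 1)) - f (X i)| :=
          Finset.sum_le_sum hterm
      _ = ((n : ℝ) * C) * ∑ i ∈ Finset.range (N - 1), |f (X (i + 1)) - f (X i)| := by
          rw [Finset.mul_sum]
      _ ≤ ((n : ℝ) * C) * Vf := by
          exact mul_le_mul_of_nonneg_left hVar (by positivity)
  rw [hMain, abs_mul, abs_of_nonneg (by positivity : (0 : ℝ) ≤ (n : ℝ)), mul_assoc] at hfinal
  have hnpos : (0 : ℝ) < n := by exact_mod_cast hn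
  exact le_of_mul_le_mul_left hfinal hnpos

/-- If all eigenvalues of the real symmetric matrices `A` and `B` lie in the
(possibly unbounded) open interval `(a, b)` and `f` is of bounded variation on
`(a, b)` with total variation `Vf`, then
`|F_A(f) - F_B(f)| ≤ ‖F_A - F_B‖_∞ · Vf`; in particular, if
`‖F_A - F_B‖_∞ ≤ r/n` then `|F_A(f) - F_B(f)| ≤ r·Vf/n`. -/
theorem specInt_diff_le_sup_esd_mul_variation (n : ℕ) (hn : 0 < n)
    (A B : Matrix (Fin n) (Fin n) ℝ) (hA : A.IsHermitian) (hB : B.IsHermitian)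
    (a b : EReal) (hab : a < b)
    (hAspec : ∀ i, a < (hA.eigenvalues i : EReal) ∧ (hA.eigenvalues i : EReal) < b)
    (hBspec : ∀ i, a < (hB.eigenvalues i : EReal) ∧ (hB.eigenvalues i : EReal) < b)
    (f : ℝ → ℝ) (Vf : ℝ) (hVf0 : 0 ≤ Vf)
    (hVf : eVariationOn f {x : ℝ | a < (x : EReal) ∧ (x : EReal) < b} = ENNReal.ofReal Vf) :
    |specInt A f - specInt B f|
        ≤ (⨆ lam : ℝ, |esdCDF A lam - esdCDF B lam|) * Vf ∧
      ∀ r : ℕ, (∀ lam : ℝ, |esdCDF A lam - esdCDF B lam| ≤ (r : ℝ) / n) →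
        |specInt A f - specInt B f| ≤ (r : ℝ) * Vf / n := by
  constructor
  · have hbdd : BddAbove (Set.range fun lam => |esdCDF A lam - esdCDF B lam|) := by
      refine ⟨1, ?_⟩
      rintro y ⟨lam, rfl⟩
      have h1 := esdCDF_nonneg A hA lam
      have h2 := esdCDF_le_one hn A hA lam
      have h3 := esdCDF_nonneg B hB lam
      have h4 := esdCDF_le_one hn B hB lam
      rw [abs_sub_le_iff]
      constructor <;> linarith
    have hCle : ∀ lam : ℝ, |esdCDF A lam - esdCDF B lam|
        ≤ ⨆ lam : ℝ, |esdCDF A lam - esdCDF B lam| := fun lam => le_ciSup hbdd lam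
    have hC0 : 0 ≤ ⨆ lam : ℝ, |esdCDF A lam - esdCDF B lam| :=
      le_trans (abs_nonneg _) (hCle 0)
    exact key hn A B hA hB a b hAspec hBspec f Vf hVf0 hVf _ hC0 hCle
  · intro r hr
    have h := key hn A B hA hB a b hAspec hBspec f Vf hVf0 hVf ((r : ℝ) / n)
      (by positivity) hr
    calc |specInt A f - specInt B f| ≤ (r : ℝ) / n * Vf := h
      _ = (r : ℝ) * Vf / n := by ring
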